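/- Let Θ = V̄×Ā. There exist two IRL problems τ = (M, π^E) and τ̂ = (M̂, π̂^E) on a common finite state space with |S| ≥ 2, common action space, and common horizon H ≥ 2, such that D^L(τ, τ̂) = 0 but D^all_Θ(R^τ, R^τ̂) ≥ 1, where R^τ and R^τ̂ are the ground-truth reward mappings induced by τ and τ̂ respectively. -/

import Mathlib

open Finset
open scoped Classical ENNReal NNReal

namespace IRL

/-- `P` is a valid transition kernel: each `P h s a` is a probability
distribution over next states. -/
def IsKernel {S A : Type*} [Fintype S] (P : ℕ → S → A → S → ℝ) : Prop :=
  ∀ h s a, (∀ s', 0 ≤ P h s a s') ∧ ∑ s', P h s a s' = 1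

/-- `π` is a valid (Markov, time-dependent, randomized) policy. -/
def IsPolicy {S A : Type*} [Fintype A] (π : ℕ → S → A → ℝ) : Prop :=
  ∀ h s, (∀ a, 0 ≤ π h s a) ∧ ∑ a, π h s a = 1

/-- Value function `V^π_h(s; r)` (steps are 0-based, horizon `H`). -/
noncomputable def Vval {S A : Type*} [Fintype S] [Fintype A] (H : ℕ)
    (P : ℕ → S → A → S → ℝ) (π : ℕ → S → A → ℝ) (r : ℕ → S → A → ℝ)
    (h : ℕ) (s : S) : ℝ :=
  if hlt : h < H then
    ∑ a, π h s a * (r h s a + ∑ s', P h s a s' * Vval H P π r (h + 1) s')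
  else 0
termination_by H - h
decreasing_by omega

/-- Q-function `Q^π_h(s, a; r)`. -/
noncomputable def Qval {S A : Type*} [Fintype S] [Fintype A] (H : ℕ)
    (P : ℕ → S → A → S → ℝ) (π : ℕ → S → A → ℝ) (r : ℕ → S → A → ℝ)
    (h : ℕ) (s : S) (a : A) : ℝ :=
  if h < H then r h s a + ∑ s', P h s a s' * Vval H P π r (h + 1) s' else 0

/-- `π` is an optimal policy of the MDP `M ∪ r`: its advantage function is
nonpositive at every `(h, s, a)`. -/
def IsOptimal {S A : Type*} [Fintype S] [Fintype A] (H : ℕ)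
    (P : ℕ → S → A → S → ℝ) (r : ℕ → S → A → ℝ) (π : ℕ → S → A → ℝ) : Prop :=
  ∀ h, h < H → ∀ s a, Qval H P π r h s a ≤ Vval H P π r h s

/-- `r` is a feasible reward for the IRL problem `(M, πE)`. -/
def Feasible {S A : Type*} [Fintype S] [Fintype A] (H : ℕ)
    (P : ℕ → S → A → S → ℝ) (πE : ℕ → S → A → ℝ) (r : ℕ → S → A → ℝ) : Prop :=
  IsOptimal H P r πE

/-- State visitation probability `d^π_h(s)`, starting from `s1`. -/
noncomputable def dvisit {S A : Type*} [Fintype S] [Fintype A]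
    (P : ℕ → S → A → S → ℝ) (π : ℕ → S → A → ℝ) (s1 : S) : ℕ → S → ℝ
  | 0 => fun s => if s = s1 then 1 else 0
  | h + 1 => fun s' => ∑ s, ∑ a, dvisit P π s1 h s * π h s a * P h s a s'

/-- State-action visitation probability `d^π_h(s, a)`. -/
noncomputable def dvisitSA {S A : Type*} [Fintype S] [Fintype A]
    (P : ℕ → S → A → S → ℝ) (π : ℕ → S → A → ℝ) (s1 : S)
    (h : ℕ) (s : S) (a : A) : ℝ :=
  dvisit P π s1 h s * π h s a

/-- The ground-truth reward mapping `R★` of the IRL problem `(M, πE)`: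
`[R★(V,A)]_h(s,a) = -A_h(s,a)·1{a ∉ supp πE_h(·|s)} + V_h(s) - [P_h V_{h+1}](s,a)`. -/
noncomputable def RStar {S A : Type*} [Fintype S] [Fintype A]
    (P : ℕ → S → A → S → ℝ) (πE : ℕ → S → A → ℝ)
    (V : ℕ → S → ℝ) (Adv : ℕ → S → A → ℝ) : ℕ → S → A → ℝ := fun h s a =>
  -(Adv h s a) * (if πE h s a = 0 then 1 else 0) + V h s -
    ∑ s', P h s a s' * V (h + 1) s'

/-- The parameter class `V̄` of bounded "value functions" (0-based steps; the
bound `H - h` in particular forces `V h = 0` for `h ≥ H`, i.e. `V_{H+1} = 0`). -/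
def Vbar (S : Type*) (H : ℕ) : Set (ℕ → S → ℝ) :=
  {V | ∀ h s, |V h s| ≤ ((H - h : ℕ) : ℝ)}

/-- The parameter class `Ā` of bounded nonnegative "advantage functions". -/
def Abar (S A : Type*) (H : ℕ) : Set (ℕ → S → A → ℝ) :=
  {Adv | ∀ h s a, 0 ≤ Adv h s a ∧ Adv h s a ≤ ((H - h : ℕ) : ℝ)}

/-- Optimal value `V★_1(s1; r)`. -/
noncomputable def Vstar {S A : Type*} [Fintype S] [Fintype A] (H : ℕ)
    (P : ℕ → S → A → S → ℝ) (r : ℕ → S → A → ℝ) (s1 : S) : ℝ :=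
  ⨆ π : {π : ℕ → S → A → ℝ // IsPolicy π}, Vval H P π.1 r 0 s1

/-- The base-metric bound `d^π(r, r') ≤ ε`, stated pointwise over steps `h < H`
(recall `d^π(r,r') = max_{h} E_{s_h ∼ d^π_h} |V^π_h(s_h;r) - V^π_h(s_h;r')|`). -/
def dpiLe {S A : Type*} [Fintype S] [Fintype A] (H : ℕ)
    (P : ℕ → S → A → S → ℝ) (π : ℕ → S → A → ℝ) (s1 : S)
    (r r' : ℕ → S → A → ℝ) (ε : ℝ) : Prop :=
  ∀ h, h < H →
    ∑ s, dvisit P π s1 h s * |Vval H P π r h s - Vval H P π r' h s| ≤ ε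

/-- The expert policy is `Δ`-well-posed. -/
def WellPosed {S A : Type*} (H : ℕ) (πE : ℕ → S → A → ℝ) (Δ : ℝ) : Prop :=
  ∀ h, h < H → ∀ s a, πE h s a ≠ 0 → Δ ≤ πE h s a

/-- `πeval` satisfies `C★` (average-form) single-policy concentrability with
respect to `πb` (with the convention `0/0 = 0`). -/
def Concentrable {S A : Type*} [Fintype S] [Fintype A] (H : ℕ)
    (P : ℕ → S → A → S → ℝ) (πeval πb : ℕ → S → A → ℝ) (s1 : S)
    (Cstar : ℝ) : Prop :=
  (∀ h, h < H → ∀ s a, dvisitSA P πb s1 h s a = 0 → dvisitSA P πeval s1 h s a = 0) ∧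
  (1 / ((H : ℝ) * (Fintype.card S : ℝ))) *
      ∑ h ∈ Finset.range H, ∑ s, ∑ a,
        dvisitSA P πeval s1 h s a / dvisitSA P πb s1 h s a ≤ Cstar

/-- The base metric `d^π(r, r')` as a supremum over steps. -/
noncomputable def dpiSup {S A : Type*} [Fintype S] [Fintype A] (H : ℕ)
    (P : ℕ → S → A → S → ℝ) (π : ℕ → S → A → ℝ) (s1 : S)
    (r r' : ℕ → S → A → ℝ) : ℝ :=
  ⨆ h : Fin H, ∑ s, dvisit P π s1 h s * |Vval H P π r h s - Vval H P π r' h s|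

/-- The metric `D^all_Θ` between two reward mappings: the supremum over all
policies `π` and all parameters `(V, A) ∈ Θ` of `d^π(R(V,A), R'(V,A))`. -/
noncomputable def DallTheta {S A : Type*} [Fintype S] [Fintype A] (H : ℕ)
    (P : ℕ → S → A → S → ℝ) (s1 : S)
    (Θ : Set ((ℕ → S → ℝ) × (ℕ → S → A → ℝ)))
    (R R' : (ℕ → S → ℝ) → (ℕ → S → A → ℝ) → ℕ → S → A → ℝ) : ℝ :=
  ⨆ π : {π : ℕ → S → A → ℝ // IsPolicy π}, ⨆ p : Θ,
    dpiSup H P π.1 s1 (R p.1.1 p.1.2) (R' p.1.1 p.1.2)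

/-- Lindner et al.'s metric `D^L` between two IRL problems
`τ = (M, πE)` and `τ̂ = (M̂, π̂E)` (all Q-values evaluated in `M ∪ r`). -/
noncomputable def DL {S A : Type*} [Fintype S] [Fintype A] (H : ℕ)
    (P Phat : ℕ → S → A → S → ℝ) (πE πEhat : ℕ → S → A → ℝ) (s1 : S) : ℝ :=
  max
    (⨆ r : {r : ℕ → S → A → ℝ // Feasible H P πE r},
      ⨅ rh : {r : ℕ → S → A → ℝ // Feasible H Phat πEhat r},
        ⨆ πs : {π : ℕ → S → A → ℝ // IsPolicy π ∧ IsOptimal H P r.1 π},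
          ⨆ πh : {π : ℕ → S → A → ℝ // IsPolicy π ∧ IsOptimal H Phat rh.1 π},
            ⨆ a : A, |Qval H P πs.1 r.1 0 s1 a - Qval H P πh.1 r.1 0 s1 a|)
    (⨆ rh : {r : ℕ → S → A → ℝ // Feasible H Phat πEhat r},
      ⨅ r : {r : ℕ → S → A → ℝ // Feasible H P πE r},
        ⨆ πs : {π : ℕ → S → A → ℝ // IsPolicy π ∧ IsOptimal H P r.1 π},
          ⨆ πh : {π : ℕ → S → A → ℝ // IsPolicy π ∧ IsOptimal H Phat rh.1 π},
            ⨆ a : A, |Qval H P πs.1 r.1 0 s1 a - Qval H P πh.1 r.1 0 s1 a|)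

/-- Robust form of the bound `D^L(τ, τ̂) ≤ ε`. -/
def DLle {S A : Type*} [Fintype S] [Fintype A] (H : ℕ)
    (P Phat : ℕ → S → A → S → ℝ) (πE πEhat : ℕ → S → A → ℝ) (s1 : S)
    (ε : ℝ) : Prop :=
  (∀ r, Feasible H P πE r → ∃ rh, Feasible H Phat πEhat rh ∧
    ∀ πs, IsPolicy πs → IsOptimal H P r πs →
      ∀ πh, IsPolicy πh → IsOptimal H Phat rh πh →
        ∀ a, |Qval H P πs r 0 s1 a - Qval H P πh r 0 s1 a| ≤ ε) ∧
  (∀ rh, Feasible H Phat πEhat rh → ∃ r, Feasible H P πE r ∧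
    ∀ πs, IsPolicy πs → IsOptimal H P r πs →
      ∀ πh, IsPolicy πh → IsOptimal H Phat rh πh →
        ∀ a, |Qval H P πs r 0 s1 a - Qval H P πh r 0 s1 a| ≤ ε)
section Aux

variable {S A : Type*} [Fintype S] [Fintype A]

/-- Deterministic kernel sending everything to `t`. -/
noncomputable def Pdet (A : Type*) (t : S) : ℕ → S → A → S → ℝ := fun _ _ _ s' => if s' = t then 1 else 0

/-- The uniform policy. -/
noncomputable def unif (S A : Type*) [Fintype A] : ℕ → S → A → ℝ :=
  fun _ _ _ => (Fintype.card A : ℝ)⁻¹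

lemma isKernel_Pdet (t : S) : IsKernel (Pdet A t) := by
  refine fun h s a => ⟨fun s' => ?_, ?_⟩
  · by_cases h' : s' = t <;> simp [Pdet, h']
  · simp [Pdet, Finset.sum_ite_eq']

lemma isPolicy_unif (S A : Type*) [Fintype A] [Nonempty A] : IsPolicy (unif S A) := by
  intro h s
  constructor
  · intro a; simp only [unif]; positivity
  · simp only [unif]; rw [Finset.sum_const, nsmul_eq_mul, Finset.card_univ,
      mul_inv_cancel₀ (Nat.cast_ne_zero.2 Fintype.card_pos.ne')]

lemma sum_Pdet_mul (t : S) (h : ℕ) (s : S) (a : A) (W : S → ℝ) :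
    ∑ s', Pdet A t h s a s' * W s' = W t := by
  simp [Pdet, ite_mul, Finset.sum_ite_eq']

lemma Vval_det {H : ℕ} (t : S) (π r : ℕ → S → A → ℝ) {h : ℕ} (hlt : h < H) (s : S) :
    Vval H (Pdet A t) π r h s
      = ∑ a, π h s a * (r h s a + Vval H (Pdet A t) π r (h + 1) t) := by
  rw [Vval, dif_pos hlt]
  exact Finset.sum_congr rfl fun a _ => by rw [sum_Pdet_mul]

lemma Vval_det_const {H : ℕ} (t : S) {π : ℕ → S → A → ℝ} (hπ : IsPolicy π)
    {r : ℕ → S → A → ℝ} {h : ℕ} {s : S} (hc : ∀ a a', r h s a = r h s a')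
    (hlt : h < H) (a0 : A) :
    Vval H (Pdet A t) π r h s = r h s a0 + Vval H (Pdet A t) π r (h + 1) t := by
  rw [Vval_det t π r hlt s]
  calc ∑ a, π h s a * (r h s a + Vval H (Pdet A t) π r (h + 1) t)
      = ∑ a, π h s a * (r h s a0 + Vval H (Pdet A t) π r (h + 1) t) :=
        Finset.sum_congr rfl fun a _ => by rw [hc a a0]
    _ = (∑ a, π h s a) * (r h s a0 + Vval H (Pdet A t) π r (h + 1) t) :=
        (Finset.sum_mul _ _ _).symm
    _ = r h s a0 + Vval H (Pdet A t) π r (h + 1) t := by rw [(hπ h s).2, one_mul]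

lemma Qval_det {H : ℕ} (t : S) (π r : ℕ → S → A → ℝ) {h : ℕ} (hlt : h < H) (s : S) (a : A) :
    Qval H (Pdet A t) π r h s a = r h s a + Vval H (Pdet A t) π r (h + 1) t := by
  rw [Qval, if_pos hlt, sum_Pdet_mul]

lemma Vval_indep [Nonempty A] {H : ℕ} (t : S) {r : ℕ → S → A → ℝ}
    (hc : ∀ h s a a', h < H → r h s a = r h s a')
    {π π' : ℕ → S → A → ℝ} (hπ : IsPolicy π) (hπ' : IsPolicy π') :
    ∀ h s, Vval H (Pdet A t) π r h s = Vval H (Pdet A t) π' r h s := by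
  suffices key : ∀ n h, H ≤ h + n → ∀ s,
      Vval H (Pdet A t) π r h s = Vval H (Pdet A t) π' r h s by
    exact fun h s => key H h (by omega) s
  intro n
  induction n with
  | zero => intro h hh s; rw [Vval, dif_neg (by omega), Vval, dif_neg (by omega)]
  | succ n ih =>
    intro h hh s
    by_cases hlt : h < H
    · have a0 : A := Classical.arbitrary A
      rw [Vval_det_const t hπ (fun a a' => hc h s a a' hlt) hlt a0,
        Vval_det_const t hπ' (fun a a' => hc h s a a' hlt) hlt a0,
        ih (h + 1) (by omega) t]
    · rw [Vval, dif_neg hlt, Vval, dif_neg hlt]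

lemma feasible_of_const {H : ℕ} (t : S) {π : ℕ → S → A → ℝ} (hπ : IsPolicy π)
    {r : ℕ → S → A → ℝ} (hc : ∀ h s a a', h < H → r h s a = r h s a') :
    Feasible H (Pdet A t) π r := by
  intro h hlt s a
  rw [Qval_det t π r hlt s a, Vval_det_const t hπ (fun b b' => hc h s b b' hlt) hlt a]

lemma const_of_feasible [Nonempty A] {H : ℕ} (t : S) {r : ℕ → S → A → ℝ}
    (hf : Feasible H (Pdet A t) (unif S A) r) :
    ∀ h s a a', h < H → r h s a = r h s a' := by
  intro h s a a' hlt
  set u : ℝ := (Fintype.card A : ℝ)⁻¹ with hu_def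
  have hu : 0 < u := by positivity
  set K := Vval H (Pdet A t) (unif S A) r (h + 1) t with hK
  set V := Vval H (Pdet A t) (unif S A) r h s with hV
  have hQ : ∀ b : A, r h s b + K ≤ V := by
    intro b
    have := hf h hlt s b
    rwa [Qval_det t _ r hlt s b] at this
  have hsum : ∑ b : A, u = 1 := ((isPolicy_unif S A) h s).2
  have hVeq : ∑ b : A, u * (r h s b + K) = V := by
    rw [hV, Vval_det t _ r hlt s]; rfl
  have hz : ∑ b : A, u * (V - (r h s b + K)) = 0 := by
    simp only [mul_sub]
    rw [Finset.sum_sub_distrib, ← Finset.sum_mul, hsum, one_mul, hVeq, sub_self]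
  have hall := (Finset.sum_eq_zero_iff_of_nonneg
    (fun b _ => mul_nonneg hu.le (sub_nonneg.2 (hQ b)))).1 hz
  have key : ∀ b : A, r h s b = V - K := by
    intro b
    have := hall b (Finset.mem_univ b)
    have h2 : V - (r h s b + K) = 0 := by
      rcases mul_eq_zero.1 this with h' | h'
      · exact absurd h' hu.ne'
      · exact h'
    linarith
  rw [key a, key a']

end Aux

section Aux2

variable {S A : Type*} [Fintype S] [Fintype A]

lemma Vval_sub {H : ℕ} {P : ℕ → S → A → S → ℝ} (hP : IsKernel P)
    {π : ℕ → S → A → ℝ} (hπ : IsPolicy π) {r r' : ℕ → S → A → ℝ} (δ : ℕ → ℝ)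
    (hδ : ∀ h s a, h < H → r h s a = r' h s a + δ h) :
    ∀ h s, Vval H P π r h s = Vval H P π r' h s + ∑ k ∈ Finset.Ico h H, δ k := by
  suffices key : ∀ n h, H ≤ h + n → ∀ s,
      Vval H P π r h s = Vval H P π r' h s + ∑ k ∈ Finset.Ico h H, δ k by
    exact fun h s => key H h (by omega) s
  intro n
  induction n with
  | zero =>
    intro h hh s
    rw [Vval, dif_neg (by omega), Vval, dif_neg (by omega),
      Finset.Ico_eq_empty (by omega), Finset.sum_empty, add_zero]
  | succ n ih =>
    intro h hh s
    by_cases hlt : h < H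
    · set C := ∑ k ∈ Finset.Ico (h + 1) H, δ k with hC
      have hr' : Vval H P π r' h s
          = ∑ a, π h s a * (r' h s a + ∑ s', P h s a s' * Vval H P π r' (h + 1) s') := by
        rw [Vval, dif_pos hlt]
      have step : ∀ a : A, π h s a * (r h s a + ∑ s', P h s a s' * Vval H P π r (h + 1) s')
          = π h s a * (r' h s a + ∑ s', P h s a s' * Vval H P π r' (h + 1) s')
            + π h s a * (δ h + C) := by
        intro a
        have h1 : ∑ s', P h s a s' * Vval H P π r (h + 1) s'
            = (∑ s', P h s a s' * Vval H P π r' (h + 1) s') + C := by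
          calc ∑ s', P h s a s' * Vval H P π r (h + 1) s'
              = ∑ s', (P h s a s' * Vval H P π r' (h + 1) s' + P h s a s' * C) :=
                Finset.sum_congr rfl fun s' _ => by
                  rw [ih (h + 1) (by omega) s', mul_add]
            _ = (∑ s', P h s a s' * Vval H P π r' (h + 1) s') + (∑ s', P h s a s') * C := by
                rw [Finset.sum_add_distrib, Finset.sum_mul]
            _ = (∑ s', P h s a s' * Vval H P π r' (h + 1) s') + C := by
                rw [(hP h s a).2, one_mul]
        rw [h1, hδ h s a hlt]; ring
      rw [Vval, dif_pos hlt, Finset.sum_congr rfl fun a _ => step a,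
        Finset.sum_add_distrib, ← Finset.sum_mul, (hπ h s).2, one_mul, hr'.symm,
        Finset.sum_eq_sum_Ico_succ_bot hlt]
    · rw [Vval, dif_neg hlt, Vval, dif_neg hlt,
        Finset.Ico_eq_empty (by omega), Finset.sum_empty, add_zero]

lemma dvisit_nonneg {P : ℕ → S → A → S → ℝ} (hP : IsKernel P)
    {π : ℕ → S → A → ℝ} (hπ : IsPolicy π) (s1 : S) :
    ∀ h s, 0 ≤ dvisit P π s1 h s := by
  intro h
  induction h with
  | zero => intro s; simp only [dvisit]; positivity
  | succ h ih =>
    intro s'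
    simp only [dvisit]
    exact Finset.sum_nonneg fun s _ => Finset.sum_nonneg fun a _ =>
      mul_nonneg (mul_nonneg (ih s) ((hπ h s).1 a)) ((hP h s a).1 s')

lemma dvisit_sum_eq_one {P : ℕ → S → A → S → ℝ} (hP : IsKernel P)
    {π : ℕ → S → A → ℝ} (hπ : IsPolicy π) (s1 : S) :
    ∀ h, ∑ s, dvisit P π s1 h s = 1 := by
  intro h
  induction h with
  | zero => simp [dvisit, Finset.sum_ite_eq']
  | succ h ih =>
    calc ∑ s', dvisit P π s1 (h + 1) s'
        = ∑ s', ∑ s, ∑ a, dvisit P π s1 h s * π h s a * P h s a s' := rfl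
      _ = ∑ s, ∑ s', ∑ a, dvisit P π s1 h s * π h s a * P h s a s' := Finset.sum_comm
      _ = ∑ s, ∑ a, ∑ s', dvisit P π s1 h s * π h s a * P h s a s' :=
          Finset.sum_congr rfl fun s _ => Finset.sum_comm
      _ = ∑ s, ∑ a, dvisit P π s1 h s * π h s a :=
          Finset.sum_congr rfl fun s _ => Finset.sum_congr rfl fun a _ => by
            rw [← Finset.mul_sum, (hP h s a).2, mul_one]
      _ = ∑ s, dvisit P π s1 h s :=
          Finset.sum_congr rfl fun s _ => by rw [← Finset.mul_sum, (hπ h s).2, mul_one]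
      _ = 1 := ih

lemma Vval_abs_le {H : ℕ} {P : ℕ → S → A → S → ℝ} (hP : IsKernel P)
    {π : ℕ → S → A → ℝ} (hπ : IsPolicy π) {r : ℕ → S → A → ℝ} {B : ℝ} (hB : 0 ≤ B)
    (hr : ∀ h s a, h < H → |r h s a| ≤ B) :
    ∀ h s, |Vval H P π r h s| ≤ ((H - h : ℕ) : ℝ) * B := by
  suffices key : ∀ n h, H ≤ h + n → ∀ s, |Vval H P π r h s| ≤ ((H - h : ℕ) : ℝ) * B by
    exact fun h s => key H h (by omega) s
  intro n
  induction n with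
  | zero => intro h hh s; rw [Vval, dif_neg (by omega)]; simp; positivity
  | succ n ih =>
    intro h hh s
    by_cases hlt : h < H
    · rw [Vval, dif_pos hlt]
      have hterm : ∀ a : A,
          |π h s a * (r h s a + ∑ s', P h s a s' * Vval H P π r (h + 1) s')|
            ≤ π h s a * (B + ((H - (h + 1) : ℕ) : ℝ) * B) := by
        intro a
        rw [abs_mul, abs_of_nonneg ((hπ h s).1 a)]
        refine mul_le_mul_of_nonneg_left ?_ ((hπ h s).1 a)
        refine (abs_add_le _ _).trans (add_le_add (hr h s a hlt) ?_)
        calc |∑ s', P h s a s' * Vval H P π r (h + 1) s'|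
            ≤ ∑ s', |P h s a s' * Vval H P π r (h + 1) s'| := Finset.abs_sum_le_sum_abs _ _
          _ ≤ ∑ s', P h s a s' * (((H - (h + 1) : ℕ) : ℝ) * B) :=
              Finset.sum_le_sum fun s' _ => by
                rw [abs_mul, abs_of_nonneg ((hP h s a).1 s')]
                exact mul_le_mul_of_nonneg_left (ih (h + 1) (by omega) s') ((hP h s a).1 s')
          _ = ((H - (h + 1) : ℕ) : ℝ) * B := by rw [← Finset.sum_mul, (hP h s a).2, one_mul]
      calc |∑ a, π h s a * (r h s a + ∑ s', P h s a s' * Vval H P π r (h + 1) s')|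
          ≤ ∑ a, |π h s a * (r h s a + ∑ s', P h s a s' * Vval H P π r (h + 1) s')| :=
            Finset.abs_sum_le_sum_abs _ _
        _ ≤ ∑ a, π h s a * (B + ((H - (h + 1) : ℕ) : ℝ) * B) :=
            Finset.sum_le_sum fun a _ => hterm a
        _ = B + ((H - (h + 1) : ℕ) : ℝ) * B := by
            rw [← Finset.sum_mul, (hπ h s).2, one_mul]
        _ = ((H - h : ℕ) : ℝ) * B := by
            have : (H - h : ℕ) = (H - (h + 1) : ℕ) + 1 := by omega
            rw [this]; push_cast; ring
    · rw [Vval, dif_neg hlt]; simp; positivity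

lemma RStar_abs_le {H : ℕ} {P' : ℕ → S → A → S → ℝ} (hP : IsKernel P')
    (πE' : ℕ → S → A → ℝ) {V : ℕ → S → ℝ} {Adv : ℕ → S → A → ℝ}
    (hV : V ∈ Vbar S H) (hA : Adv ∈ Abar S A H) (hH1 : 1 ≤ H) :
    ∀ h s a, |RStar P' πE' V Adv h s a| ≤ 3 * (H : ℝ) := by
  intro h s a
  have hVb : ∀ k (s : S), |V k s| ≤ (H : ℝ) := fun k s =>
    (hV k s).trans (by exact_mod_cast Nat.sub_le H k)
  have hAb : |Adv h s a| ≤ (H : ℝ) := by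
    rw [abs_of_nonneg (hA h s a).1]
    exact (hA h s a).2.trans (by exact_mod_cast Nat.sub_le H h)
  have hsum : |∑ s', P' h s a s' * V (h + 1) s'| ≤ (H : ℝ) := by
    calc |∑ s', P' h s a s' * V (h + 1) s'| ≤ ∑ s', |P' h s a s' * V (h + 1) s'| :=
        Finset.abs_sum_le_sum_abs _ _
      _ ≤ ∑ s', P' h s a s' * (H : ℝ) := Finset.sum_le_sum fun s' _ => by
          rw [abs_mul, abs_of_nonneg ((hP h s a).1 s')]
          exact mul_le_mul_of_nonneg_left (hVb (h + 1) s') ((hP h s a).1 s')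
      _ = (H : ℝ) := by rw [← Finset.sum_mul, (hP h s a).2, one_mul]
  have hind : |(if πE' h s a = 0 then (1:ℝ) else 0)| ≤ 1 := by
    by_cases h' : πE' h s a = 0 <;> simp [h']
  calc |RStar P' πE' V Adv h s a|
      ≤ |(-(Adv h s a)) * (if πE' h s a = 0 then (1:ℝ) else 0)| + |V h s|
        + |∑ s', P' h s a s' * V (h + 1) s'| := by
        unfold RStar
        exact (abs_sub _ _).trans (add_le_add_left (abs_add_le _ _) _)
    _ ≤ (H : ℝ) + (H : ℝ) + (H : ℝ) := by
        refine add_le_add (add_le_add ?_ (hVb h s)) hsum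
        rw [abs_mul, abs_neg]
        calc |Adv h s a| * |(if πE' h s a = 0 then (1:ℝ) else 0)|
            ≤ (H : ℝ) * 1 := mul_le_mul hAb hind (abs_nonneg _) (by positivity)
          _ = (H : ℝ) := mul_one _
    _ = 3 * (H : ℝ) := by ring

end Aux2


/-- with `Θ = V̄ × Ā`, there are two IRL problems which are
indistinguishable under `D^L` (distance `0`) but whose induced ground-truth
reward mappings are at `D^all_Θ`-distance at least `1`. -/
theorem DL_cannot_distinguish {S A : Type*} [Fintype S] [Fintype A] [Nonempty A]
    (H : ℕ) (hS : 2 ≤ Fintype.card S) (hH : 2 ≤ H) :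
    ∃ (P Phat : ℕ → S → A → S → ℝ) (πE πEhat : ℕ → S → A → ℝ) (s1 : S),
      IsKernel P ∧ IsKernel Phat ∧ IsPolicy πE ∧ IsPolicy πEhat ∧
      DL H P Phat πE πEhat s1 = 0 ∧
      1 ≤ DallTheta H P s1 (Vbar S H ×ˢ Abar S A H)
            (RStar P πE) (RStar Phat πEhat) := by
  obtain ⟨s1, s2, hne⟩ := Fintype.exists_pair_of_one_lt_card (by omega : 1 < Fintype.card S)
  have hπu : IsPolicy (unif S A) := isPolicy_unif S A
  refine ⟨Pdet A s1, Pdet A s2, unif S A, unif S A, s1, isKernel_Pdet s1, isKernel_Pdet s2,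
    hπu, hπu, ?_, ?_⟩
  · -- DL = 0
    have hQeq : ∀ (r : ℕ → S → A → ℝ), (∀ h s a a', h < H → r h s a = r h s a') →
        ∀ (π π' : ℕ → S → A → ℝ), IsPolicy π → IsPolicy π' → ∀ a : A,
        Qval H (Pdet A s1) π r 0 s1 a = Qval H (Pdet A s1) π' r 0 s1 a := by
      intro r hc π π' hπ hπ' a
      rw [Qval_det s1 π r (by omega) s1 a, Qval_det s1 π' r (by omega) s1 a,
        Vval_indep s1 hc hπ hπ' 1 s1]
    haveI hne1 : Nonempty {r : ℕ → S → A → ℝ // Feasible H (Pdet A s1) (unif S A) r} :=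
      ⟨⟨fun _ _ _ => 0, feasible_of_const s1 hπu (fun _ _ _ _ _ => rfl)⟩⟩
    haveI hne2 : Nonempty {r : ℕ → S → A → ℝ // Feasible H (Pdet A s2) (unif S A) r} :=
      ⟨⟨fun _ _ _ => 0, feasible_of_const s2 hπu (fun _ _ _ _ _ => rfl)⟩⟩
    have h1 : (⨆ r : {r : ℕ → S → A → ℝ // Feasible H (Pdet A s1) (unif S A) r},
        ⨅ rh : {r : ℕ → S → A → ℝ // Feasible H (Pdet A s2) (unif S A) r},
          ⨆ πs : {π : ℕ → S → A → ℝ // IsPolicy π ∧ IsOptimal H (Pdet A s1) r.1 π},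
            ⨆ πh : {π : ℕ → S → A → ℝ // IsPolicy π ∧ IsOptimal H (Pdet A s2) rh.1 π},
              ⨆ a : A, |Qval H (Pdet A s1) πs.1 r.1 0 s1 a
                - Qval H (Pdet A s1) πh.1 r.1 0 s1 a|) = 0 := by
      have hz : ∀ r : {r : ℕ → S → A → ℝ // Feasible H (Pdet A s1) (unif S A) r},
          (⨅ rh : {r : ℕ → S → A → ℝ // Feasible H (Pdet A s2) (unif S A) r},
            ⨆ πs : {π : ℕ → S → A → ℝ // IsPolicy π ∧ IsOptimal H (Pdet A s1) r.1 π},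
              ⨆ πh : {π : ℕ → S → A → ℝ // IsPolicy π ∧ IsOptimal H (Pdet A s2) rh.1 π},
                ⨆ a : A, |Qval H (Pdet A s1) πs.1 r.1 0 s1 a
                  - Qval H (Pdet A s1) πh.1 r.1 0 s1 a|) = 0 := by
        intro r
        have hc := const_of_feasible s1 r.2
        refine le_antisymm ?_ (Real.iInf_nonneg fun rh => Real.iSup_nonneg fun πs =>
          Real.iSup_nonneg fun πh => Real.iSup_nonneg fun a => abs_nonneg _)
        refine ciInf_le_of_le ⟨0, fun x hx => ?_⟩
          ⟨r.1, feasible_of_const s2 hπu hc⟩ ?_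
        · obtain ⟨rh, rfl⟩ := hx
          exact Real.iSup_nonneg fun πs => Real.iSup_nonneg fun πh =>
            Real.iSup_nonneg fun a => abs_nonneg _
        · refine Real.iSup_le (fun πs => Real.iSup_le (fun πh =>
            Real.iSup_le (fun a => ?_) le_rfl) le_rfl) le_rfl
          rw [hQeq r.1 hc πs.1 πh.1 πs.2.1 πh.2.1 a, sub_self, abs_zero]
      rw [iSup_congr hz, ciSup_const]
    have h2 : (⨆ rh : {r : ℕ → S → A → ℝ // Feasible H (Pdet A s2) (unif S A) r},
        ⨅ r : {r : ℕ → S → A → ℝ // Feasible H (Pdet A s1) (unif S A) r},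
          ⨆ πs : {π : ℕ → S → A → ℝ // IsPolicy π ∧ IsOptimal H (Pdet A s1) r.1 π},
            ⨆ πh : {π : ℕ → S → A → ℝ // IsPolicy π ∧ IsOptimal H (Pdet A s2) rh.1 π},
              ⨆ a : A, |Qval H (Pdet A s1) πs.1 r.1 0 s1 a
                - Qval H (Pdet A s1) πh.1 r.1 0 s1 a|) = 0 := by
      have hz : ∀ rh : {r : ℕ → S → A → ℝ // Feasible H (Pdet A s2) (unif S A) r},
          (⨅ r : {r : ℕ → S → A → ℝ // Feasible H (Pdet A s1) (unif S A) r},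
            ⨆ πs : {π : ℕ → S → A → ℝ // IsPolicy π ∧ IsOptimal H (Pdet A s1) r.1 π},
              ⨆ πh : {π : ℕ → S → A → ℝ // IsPolicy π ∧ IsOptimal H (Pdet A s2) rh.1 π},
                ⨆ a : A, |Qval H (Pdet A s1) πs.1 r.1 0 s1 a
                  - Qval H (Pdet A s1) πh.1 r.1 0 s1 a|) = 0 := by
        intro rh
        have hc := const_of_feasible s2 rh.2
        refine le_antisymm ?_ (Real.iInf_nonneg fun r => Real.iSup_nonneg fun πs =>
          Real.iSup_nonneg fun πh => Real.iSup_nonneg fun a => abs_nonneg _)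
        refine ciInf_le_of_le ⟨0, fun x hx => ?_⟩
          ⟨rh.1, feasible_of_const s1 hπu hc⟩ ?_
        · obtain ⟨r, rfl⟩ := hx
          exact Real.iSup_nonneg fun πs => Real.iSup_nonneg fun πh =>
            Real.iSup_nonneg fun a => abs_nonneg _
        · refine Real.iSup_le (fun πs => Real.iSup_le (fun πh =>
            Real.iSup_le (fun a => ?_) le_rfl) le_rfl) le_rfl
          rw [hQeq rh.1 hc πs.1 πh.1 πs.2.1 πh.2.1 a, sub_self, abs_zero]
      rw [iSup_congr hz, ciSup_const]
    rw [DL, h1, h2, max_self]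
  · -- DallTheta ≥ 1
    set Vf : ℕ → S → ℝ := fun h s => if s = s1 then ((H - h : ℕ) : ℝ) else 0 with hVf
    set Af : ℕ → S → A → ℝ := fun _ _ _ => 0 with hAf
    have hVmem : Vf ∈ Vbar S H := by
      intro h s
      dsimp only [Vf]
      split
      · rw [abs_of_nonneg (Nat.cast_nonneg _)]
      · simpa using Nat.cast_nonneg _
    have hAmem : Af ∈ Abar S A H := fun h s a => ⟨le_refl 0, Nat.cast_nonneg _⟩
    set r : ℕ → S → A → ℝ := RStar (Pdet A s1) (unif S A) Vf Af with hr
    set r' : ℕ → S → A → ℝ := RStar (Pdet A s2) (unif S A) Vf Af with hr'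
    set δ : ℕ → ℝ := fun h => -(((H - (h + 1)) : ℕ) : ℝ) with hδdef
    have hδ : ∀ h s a, r h s a = r' h s a + δ h := by
      intro h s a
      rw [hr, hr']
      unfold RStar
      rw [sum_Pdet_mul s1 h s a, sum_Pdet_mul s2 h s a]
      have e1 : Vf (h + 1) s1 = ((H - (h + 1) : ℕ) : ℝ) := by simp [Vf]
      have e2 : Vf (h + 1) s2 = 0 := by simp [Vf, Ne.symm hne]
      rw [e1, e2, hδdef]
      simp only [Af, neg_zero, zero_mul, zero_add, sub_zero]
      ring
    have hdiff := Vval_sub (H := H) (isKernel_Pdet s1) hπu δ (fun h s a _ => hδ h s a) 0 s1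
    have hsumδ : 1 ≤ |∑ k ∈ Finset.Ico 0 H, δ k| := by
      have e : ∑ k ∈ Finset.Ico 0 H, δ k
          = -(∑ k ∈ Finset.range H, (((H - (k + 1)) : ℕ) : ℝ)) := by
        rw [← Finset.range_eq_Ico, ← Finset.sum_neg_distrib]
      rw [e, abs_neg, abs_of_nonneg (Finset.sum_nonneg fun k _ => Nat.cast_nonneg _)]
      calc (1 : ℝ) ≤ (((H - (0 + 1)) : ℕ) : ℝ) := by
            have h1 : 1 ≤ H - (0 + 1) := by omega
            exact_mod_cast h1
        _ ≤ ∑ k ∈ Finset.range H, (((H - (k + 1)) : ℕ) : ℝ) :=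
            Finset.single_le_sum (f := fun k => (((H - (k + 1)) : ℕ) : ℝ))
              (fun k _ => Nat.cast_nonneg _)
              (Finset.mem_range.2 (show 0 < H by omega))
    -- uniform bound
    set C : ℝ := (H : ℝ) * (3 * H) + (H : ℝ) * (3 * H) with hCdef
    have hC : ∀ (π : {π : ℕ → S → A → ℝ // IsPolicy π})
        (p : ↥((Vbar S H ×ˢ Abar S A H : Set ((ℕ → S → ℝ) × (ℕ → S → A → ℝ))))),
        dpiSup H (Pdet A s1) π.1 s1 (RStar (Pdet A s1) (unif S A) p.1.1 p.1.2)
          (RStar (Pdet A s2) (unif S A) p.1.1 p.1.2) ≤ C := by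
      intro π p
      obtain ⟨hVm, hAm⟩ := Set.mem_prod.1 p.2
      have hbound : ∀ (P' : ℕ → S → A → S → ℝ), IsKernel P' → ∀ h s,
          |Vval H (Pdet A s1) π.1 (RStar P' (unif S A) p.1.1 p.1.2) h s| ≤ (H : ℝ) * (3 * H) := by
        intro P' hP' h s
        refine (Vval_abs_le (isKernel_Pdet s1) π.2 (by positivity)
          (fun h s a _ => RStar_abs_le hP' _ hVm hAm (by omega) h s a) h s).trans ?_
        have : ((H - h : ℕ) : ℝ) ≤ (H : ℝ) := by exact_mod_cast Nat.sub_le H h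
        nlinarith [Nat.cast_nonneg (α := ℝ) H]
      refine Real.iSup_le (fun k => ?_) (by positivity)
      calc ∑ s, dvisit (Pdet A s1) π.1 s1 k s *
            |Vval H (Pdet A s1) π.1 (RStar (Pdet A s1) (unif S A) p.1.1 p.1.2) k s
              - Vval H (Pdet A s1) π.1 (RStar (Pdet A s2) (unif S A) p.1.1 p.1.2) k s|
          ≤ ∑ s, dvisit (Pdet A s1) π.1 s1 k s * C := by
            refine Finset.sum_le_sum fun s _ => mul_le_mul_of_nonneg_left ?_
              (dvisit_nonneg (isKernel_Pdet s1) π.2 s1 k s)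
            rw [hCdef]
            exact (abs_sub _ _).trans (add_le_add
              (hbound _ (isKernel_Pdet s1) k s) (hbound _ (isKernel_Pdet s2) k s))
        _ = C := by rw [← Finset.sum_mul, dvisit_sum_eq_one (isKernel_Pdet s1) π.2 s1 k, one_mul]
    haveI hΘne : Nonempty
        ↥((Vbar S H ×ˢ Abar S A H : Set ((ℕ → S → ℝ) × (ℕ → S → A → ℝ)))) :=
      ⟨⟨(Vf, Af), Set.mem_prod.2 ⟨hVmem, hAmem⟩⟩⟩
    set π0 : {π : ℕ → S → A → ℝ // IsPolicy π} := ⟨unif S A, hπu⟩ with hπ0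
    set p0 : ↥((Vbar S H ×ˢ Abar S A H : Set ((ℕ → S → ℝ) × (ℕ → S → A → ℝ)))) :=
      ⟨(Vf, Af), Set.mem_prod.2 ⟨hVmem, hAmem⟩⟩ with hp0
    have step1 : 1 ≤ dpiSup H (Pdet A s1) (unif S A) s1 r r' := by
      rw [dpiSup]
      have hfin : BddAbove (Set.range fun k : Fin H =>
          ∑ s, dvisit (Pdet A s1) (unif S A) s1 k s *
            |Vval H (Pdet A s1) (unif S A) r k s - Vval H (Pdet A s1) (unif S A) r' k s|) :=
        (Set.finite_range _).bddAbove
      refine le_trans ?_ (le_ciSup hfin ⟨0, by omega⟩)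
      have hf0 : (∑ s, dvisit (Pdet A s1) (unif S A) s1 0 s *
          |Vval H (Pdet A s1) (unif S A) r 0 s - Vval H (Pdet A s1) (unif S A) r' 0 s|)
          = |Vval H (Pdet A s1) (unif S A) r 0 s1 - Vval H (Pdet A s1) (unif S A) r' 0 s1| := by
        simp [dvisit, ite_mul, Finset.sum_ite_eq']
      show (1 : ℝ) ≤ ∑ s, dvisit (Pdet A s1) (unif S A) s1 0 s *
          |Vval H (Pdet A s1) (unif S A) r 0 s - Vval H (Pdet A s1) (unif S A) r' 0 s|
      rw [hf0, hdiff]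
      simpa using hsumδ
    have step2 : dpiSup H (Pdet A s1) (unif S A) s1 r r' ≤
        ⨆ p : ↥((Vbar S H ×ˢ Abar S A H : Set ((ℕ → S → ℝ) × (ℕ → S → A → ℝ)))),
          dpiSup H (Pdet A s1) π0.1 s1 (RStar (Pdet A s1) (unif S A) p.1.1 p.1.2)
            (RStar (Pdet A s2) (unif S A) p.1.1 p.1.2) := by
      have hbdd : BddAbove (Set.range fun p :
          ↥((Vbar S H ×ˢ Abar S A H : Set ((ℕ → S → ℝ) × (ℕ → S → A → ℝ)))) =>
          dpiSup H (Pdet A s1) π0.1 s1 (RStar (Pdet A s1) (unif S A) p.1.1 p.1.2)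
            (RStar (Pdet A s2) (unif S A) p.1.1 p.1.2)) := by
        refine ⟨C, ?_⟩
        rintro x ⟨p, rfl⟩
        exact hC π0 p
      exact le_ciSup hbdd p0
    have step3 : (⨆ p : ↥((Vbar S H ×ˢ Abar S A H : Set ((ℕ → S → ℝ) × (ℕ → S → A → ℝ)))),
          dpiSup H (Pdet A s1) π0.1 s1 (RStar (Pdet A s1) (unif S A) p.1.1 p.1.2)
            (RStar (Pdet A s2) (unif S A) p.1.1 p.1.2)) ≤
        DallTheta H (Pdet A s1) s1 (Vbar S H ×ˢ Abar S A H)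
          (RStar (Pdet A s1) (unif S A)) (RStar (Pdet A s2) (unif S A)) := by
      rw [DallTheta]
      have hbdd : BddAbove (Set.range fun π : {π : ℕ → S → A → ℝ // IsPolicy π} =>
          ⨆ p : ↥((Vbar S H ×ˢ Abar S A H : Set ((ℕ → S → ℝ) × (ℕ → S → A → ℝ)))),
            dpiSup H (Pdet A s1) π.1 s1 (RStar (Pdet A s1) (unif S A) p.1.1 p.1.2)
              (RStar (Pdet A s2) (unif S A) p.1.1 p.1.2)) := by
        refine ⟨C, ?_⟩
        rintro x ⟨π, rfl⟩
        exact ciSup_le fun p => hC π p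
      exact le_ciSup hbdd π0
    exact le_trans step1 (le_trans step2 step3)

end IRL
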